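/- Define h(x) = 4x√(Δ(r_p)Δ(x)) / (Δ'(x)(r_p² − x²) + 4xΔ(x)) for x, r_p > r₊. Then its denominator D(x, r_p) = 4xΔ(x) + (r_p² − x²)Δ'(x) is strictly positive for all x, r_p > r₊; moreover h'(x) has the sign of (r_p − x): h is strictly increasing for x < r_p and strictly decreasing for x > r_p, with h(r_p) = 1. -/

import Mathlib

set_option maxHeartbeats 1600000 in
/-- Properties of `h(x) = 4x√(Δ(r_p)Δ(x)) / (Δ'(x)(r_p² − x²) + 4xΔ(x))`:
its denominator `D(x) = 4xΔ(x) + (r_p² − x²)Δ'(x)` is strictly positive for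
`x, r_p > r₊`; `h(r_p) = 1`; the derivative of `h` has the sign of `r_p − x`,
so `h` is strictly increasing on `(r₊, r_p]` and strictly decreasing on
`[r_p, ∞)`. -/
theorem h_function_properties (M a : ℝ) (hM : 0 < M)
    (ha0 : 0 ≤ a) (haM : a < M)
    (Δ : ℝ → ℝ) (hΔ : ∀ x, Δ x = x ^ 2 - 2 * M * x + a ^ 2)
    (rplus : ℝ) (hrplus : rplus = M + Real.sqrt (M ^ 2 - a ^ 2))
    (rp : ℝ) (hrp : rplus < rp)
    (h : ℝ → ℝ)
    (hh : ∀ x, h x = 4 * x * Real.sqrt (Δ rp * Δ x) /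
      ((2 * x - 2 * M) * (rp ^ 2 - x ^ 2) + 4 * x * Δ x)) :
    (∀ x : ℝ, rplus < x →
      0 < 4 * x * Δ x + (rp ^ 2 - x ^ 2) * (2 * x - 2 * M)) ∧
    h rp = 1 ∧
    (∀ x : ℝ, rplus < x → x ≠ rp → (0 < deriv h x ↔ x < rp)) ∧
    StrictMonoOn h (Set.Ioc rplus rp) ∧
    StrictAntiOn h (Set.Ici rp) := by
  have hMa : (0:ℝ) < M ^ 2 - a ^ 2 := by nlinarith
  set s := Real.sqrt (M ^ 2 - a ^ 2) with hsdef
  have hs2 : s ^ 2 = M ^ 2 - a ^ 2 := Real.sq_sqrt hMa.le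
  have hs0 : 0 < s := Real.sqrt_pos.mpr hMa
  have hMrplus : M < rplus := by rw [hrplus]; linarith
  have hrplus0 : 0 < rplus := lt_trans hM hMrplus
  -- Δ is positive beyond rplus
  have hΔpos : ∀ x : ℝ, rplus < x → 0 < Δ x := by
    intro x hx
    rw [hΔ]
    have hx' : M + s < x := by rw [← hrplus]; exact hx
    nlinarith [mul_pos (show 0 < x - M - s by linarith) (show 0 < x - M + s by linarith)]
  have hΔrp : 0 < Δ rp := hΔpos rp hrp
  -- Part 1: denominator positivity
  have part1 : ∀ x : ℝ, rplus < x →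
      0 < 4 * x * Δ x + (rp ^ 2 - x ^ 2) * (2 * x - 2 * M) := by
    intro x hx
    have hx' : M + s < x := by rw [← hrplus]; exact hx
    have hrp' : M + s < rp := by rw [← hrplus]; exact hrp
    rw [hΔ]
    nlinarith [mul_pos (show 0 < x - M - s by linarith) (show 0 < x - M + s by linarith),
      mul_pos (show 0 < rp - M - s by linarith) (show 0 < rp - M + s by linarith),
      mul_pos hs0 hM, sq_nonneg (x - rp),
      mul_pos (show 0 < x - M by linarith) (show 0 < rp - M by linarith),
      mul_pos (mul_pos (show 0 < x - M - s by linarith) (show 0 < x - M + s by linarith))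
        (show 0 < x by linarith),
      mul_pos (mul_pos (show 0 < rp - M - s by linarith) (show 0 < rp - M + s by linarith))
        (show 0 < x - M by linarith)]
  have hDpos : ∀ x : ℝ, rplus < x →
      0 < (2 * x - 2 * M) * (rp ^ 2 - x ^ 2) + 4 * x * Δ x := by
    intro x hx
    have := part1 x hx
    linarith [this]
  -- Part 2: h rp = 1
  have part2 : h rp = 1 := by
    rw [hh rp, Real.sqrt_mul_self hΔrp.le]
    have hrp0 : (0:ℝ) < rp := lt_trans hrplus0 hrp
    have hne : 4 * rp * Δ rp ≠ 0 := by positivity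
    rw [show (2 * rp - 2 * M) * (rp ^ 2 - rp ^ 2) + 4 * rp * Δ rp = 4 * rp * Δ rp by ring,
      div_self hne]
  -- rewrite h as an explicit function
  have hfun : h = fun x => 4 * x * Real.sqrt (Δ rp * (x ^ 2 - 2 * M * x + a ^ 2)) /
      ((2 * x - 2 * M) * (rp ^ 2 - x ^ 2) + 4 * x * (x ^ 2 - 2 * M * x + a ^ 2)) :=
    funext fun x => by rw [hh x, hΔ x]
  -- the derivative
  have hHD : ∀ x : ℝ, rplus < x → HasDerivAt h
      (((4 * Real.sqrt (Δ rp * Δ x) + 4 * x * (Δ rp * (2 * x - 2 * M) /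
          (2 * Real.sqrt (Δ rp * Δ x)))) *
        ((2 * x - 2 * M) * (rp ^ 2 - x ^ 2) + 4 * x * Δ x) -
        4 * x * Real.sqrt (Δ rp * Δ x) *
        (2 * (rp ^ 2 - x ^ 2) + (2 * x - 2 * M) * (-(2 * x)) +
          (4 * Δ x + 4 * x * (2 * x - 2 * M)))) /
        ((2 * x - 2 * M) * (rp ^ 2 - x ^ 2) + 4 * x * Δ x) ^ 2) x := by
    intro x hx
    have hΔx : 0 < Δ x := hΔpos x hx
    have hP : HasDerivAt (fun y : ℝ => y ^ 2 - 2 * M * y + a ^ 2) (2 * x - 2 * M) x := by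
      simpa using (((hasDerivAt_pow 2 x).sub ((hasDerivAt_id x).const_mul (2 * M))).add_const
        (a ^ 2))
    have hu : HasDerivAt (fun y : ℝ => Δ rp * (y ^ 2 - 2 * M * y + a ^ 2))
        (Δ rp * (2 * x - 2 * M)) x := hP.const_mul (Δ rp)
    have hune : Δ rp * (x ^ 2 - 2 * M * x + a ^ 2) ≠ 0 := by
      rw [← hΔ x]; positivity
    have hsq : HasDerivAt (fun y : ℝ => Real.sqrt (Δ rp * (y ^ 2 - 2 * M * y + a ^ 2)))
        (Δ rp * (2 * x - 2 * M) / (2 * Real.sqrt (Δ rp * (x ^ 2 - 2 * M * x + a ^ 2)))) x :=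
      hu.sqrt hune
    have h4x : HasDerivAt (fun y : ℝ => 4 * y) 4 x := by
      simpa using (hasDerivAt_id x).const_mul (4:ℝ)
    have hN : HasDerivAt (fun y : ℝ => 4 * y * Real.sqrt (Δ rp * (y ^ 2 - 2 * M * y + a ^ 2)))
        (4 * Real.sqrt (Δ rp * (x ^ 2 - 2 * M * x + a ^ 2)) +
          4 * x * (Δ rp * (2 * x - 2 * M) /
            (2 * Real.sqrt (Δ rp * (x ^ 2 - 2 * M * x + a ^ 2))))) x := h4x.mul hsq
    have hl : HasDerivAt (fun y : ℝ => 2 * y - 2 * M) 2 x := by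
      simpa using ((hasDerivAt_id x).const_mul (2:ℝ)).sub_const (2 * M)
    have hq : HasDerivAt (fun y : ℝ => rp ^ 2 - y ^ 2) (-(2 * x)) x := by
      simpa using (hasDerivAt_pow 2 x).const_sub (rp ^ 2)
    have hD : HasDerivAt (fun y : ℝ => (2 * y - 2 * M) * (rp ^ 2 - y ^ 2) +
        4 * y * (y ^ 2 - 2 * M * y + a ^ 2))
        (2 * (rp ^ 2 - x ^ 2) + (2 * x - 2 * M) * (-(2 * x)) +
          (4 * (x ^ 2 - 2 * M * x + a ^ 2) + 4 * x * (2 * x - 2 * M))) x :=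
      (hl.mul hq).add (h4x.mul hP)
    have hDne : (2 * x - 2 * M) * (rp ^ 2 - x ^ 2) + 4 * x * (x ^ 2 - 2 * M * x + a ^ 2) ≠ 0 := by
      rw [← hΔ x]; exact (hDpos x hx).ne'
    have := hN.div hD hDne
    rw [hfun]
    exact this.congr_deriv (by rw [hΔ x])
  -- explicit formula for the derivative
  have hderiv_eq : ∀ x : ℝ, rplus < x → deriv h x =
      2 * Δ rp * (rp ^ 2 - x ^ 2) * (4 * ((x - M) ^ 3 + M * (M ^ 2 - a ^ 2))) /
        (Real.sqrt (Δ rp * Δ x) *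
          ((2 * x - 2 * M) * (rp ^ 2 - x ^ 2) + 4 * x * Δ x) ^ 2) := by
    intro x hx
    have hΔx : 0 < Δ x := hΔpos x hx
    have ht : 0 < Real.sqrt (Δ rp * Δ x) := Real.sqrt_pos.mpr (by positivity)
    have ht2 : Real.sqrt (Δ rp * Δ x) ^ 2 = Δ rp * Δ x := Real.sq_sqrt (by positivity)
    rw [(hHD x hx).deriv]
    set t := Real.sqrt (Δ rp * Δ x) with htdef
    set D := (2 * x - 2 * M) * (rp ^ 2 - x ^ 2) + 4 * x * Δ x with hDdef
    set D' := 2 * (rp ^ 2 - x ^ 2) + (2 * x - 2 * M) * (-(2 * x)) +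
      (4 * Δ x + 4 * x * (2 * x - 2 * M)) with hD'def
    have hinner : (4 * x * (Δ rp * (2 * x - 2 * M) / (2 * t))) * t
        = 2 * x * Δ rp * (2 * x - 2 * M) := by
      field_simp
      ring
    have e1 : ((4 * t + 4 * x * (Δ rp * (2 * x - 2 * M) / (2 * t))) * D - 4 * x * t * D') * t
        = 2 * Δ rp * (rp ^ 2 - x ^ 2) * (4 * ((x - M) ^ 3 + M * (M ^ 2 - a ^ 2))) := by
      have hkey : (4 * (Δ rp * Δ x)) * D + 2 * x * Δ rp * (2 * x - 2 * M) * D -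
          4 * x * (Δ rp * Δ x) * D' =
          2 * Δ rp * (rp ^ 2 - x ^ 2) * (4 * ((x - M) ^ 3 + M * (M ^ 2 - a ^ 2))) := by
        rw [hDdef, hD'def, hΔ x, hΔ rp]
        ring
      linear_combination D * hinner + (4 * D - 4 * x * D') * ht2 + hkey
    have e2 : (4 * t + 4 * x * (Δ rp * (2 * x - 2 * M) / (2 * t))) * D - 4 * x * t * D'
        = 2 * Δ rp * (rp ^ 2 - x ^ 2) * (4 * ((x - M) ^ 3 + M * (M ^ 2 - a ^ 2))) / t :=
      (eq_div_iff ht.ne').mpr e1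
    rw [e2, div_div]
  -- the cubic factor is positive
  have hG : ∀ x : ℝ, rplus < x → 0 < 4 * ((x - M) ^ 3 + M * (M ^ 2 - a ^ 2)) := by
    intro x hx
    have hx' : M < x := lt_trans hMrplus hx
    nlinarith [pow_pos (show (0:ℝ) < x - M by linarith) 3]
  -- Part 3: sign of the derivative
  have part3 : ∀ x : ℝ, rplus < x → x ≠ rp → (0 < deriv h x ↔ x < rp) := by
    intro x hx hne
    have hΔx : 0 < Δ x := hΔpos x hx
    have ht : 0 < Real.sqrt (Δ rp * Δ x) := Real.sqrt_pos.mpr (by positivity)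
    have hD := hDpos x hx
    have hdenom : 0 < Real.sqrt (Δ rp * Δ x) *
        ((2 * x - 2 * M) * (rp ^ 2 - x ^ 2) + 4 * x * Δ x) ^ 2 := by positivity
    have hGx := hG x hx
    have hx0 : (0:ℝ) < x := lt_trans hrplus0 hx
    have hrp0 : (0:ℝ) < rp := lt_trans hrplus0 hrp
    rw [hderiv_eq x hx]
    constructor
    · intro hpos
      by_contra hle
      push_neg at hle
      have hlt : rp < x := lt_of_le_of_ne hle (Ne.symm hne)
      have : rp ^ 2 - x ^ 2 < 0 := by
        nlinarith [mul_pos (sub_pos.mpr hlt) (show 0 < x + rp by linarith)]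
      have hnum : 2 * Δ rp * (rp ^ 2 - x ^ 2) *
          (4 * ((x - M) ^ 3 + M * (M ^ 2 - a ^ 2))) < 0 := by
        apply mul_neg_of_neg_of_pos _ hGx
        exact mul_neg_of_pos_of_neg (by positivity) this
      have := div_neg_of_neg_of_pos hnum hdenom
      linarith
    · intro hlt
      have : 0 < rp ^ 2 - x ^ 2 := by
        nlinarith [mul_pos (sub_pos.mpr hlt) (show 0 < rp + x by linarith)]
      apply div_pos _ hdenom
      positivity
  -- derivative negative beyond rp
  have hderiv_neg : ∀ x : ℝ, rp < x → deriv h x < 0 := by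
    intro x hx
    have hx' : rplus < x := lt_trans hrp hx
    have hΔx : 0 < Δ x := hΔpos x hx'
    have ht : 0 < Real.sqrt (Δ rp * Δ x) := Real.sqrt_pos.mpr (by positivity)
    have hD := hDpos x hx'
    have hdenom : 0 < Real.sqrt (Δ rp * Δ x) *
        ((2 * x - 2 * M) * (rp ^ 2 - x ^ 2) + 4 * x * Δ x) ^ 2 := by positivity
    have hGx := hG x hx'
    have hx0 : (0:ℝ) < x := lt_trans hrplus0 hx'
    have hrp0 : (0:ℝ) < rp := lt_trans hrplus0 hrp
    rw [hderiv_eq x hx']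
    apply div_neg_of_neg_of_pos _ hdenom
    apply mul_neg_of_neg_of_pos _ hGx
    exact mul_neg_of_pos_of_neg (by positivity)
      (by nlinarith [mul_pos (sub_pos.mpr hx) (show 0 < x + rp by linarith)])
  -- monotonicity
  have hcont : ∀ x : ℝ, rplus < x → ContinuousAt h x := fun x hx =>
    (hHD x hx).differentiableAt.continuousAt
  have part4 : StrictMonoOn h (Set.Ioc rplus rp) := by
    apply strictMonoOn_of_deriv_pos (convex_Ioc rplus rp)
    · exact fun x hx => (hcont x hx.1).continuousWithinAt
    · rw [interior_Ioc]
      intro x hx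
      exact (part3 x hx.1 (ne_of_lt hx.2)).mpr hx.2
  have part5 : StrictAntiOn h (Set.Ici rp) := by
    apply strictAntiOn_of_deriv_neg (convex_Ici rp)
    · exact fun x hx => (hcont x (lt_of_lt_of_le hrp hx)).continuousWithinAt
    · rw [interior_Ici]
      intro x hx
      exact hderiv_neg x hx
  exact ⟨part1, part2, part3, part4, part5⟩
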